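/- Let Φ(β,γ) = −2bβ³ + (4a − b² + 2)β²γ + γ³ and let LN(v₁,v₂) = (0, −(bv₁+2v₂), v₁). Then Φ(β,γ) = 0 holds for (0,β,γ) if and only if the preimage (w₁,w₂) = LN⁻¹((0,−γ,β)) satisfies abw₁³ + (b²+2a+1)w₁²w₂ + 3bw₁w₂² + 2w₂³ = 0. -/
import Mathlib


/-- Limiting normal map of a cross-cap with parameter `b`. -/
noncomputable def LN (b : ℝ) (v : ℝ × ℝ) : ℝ × ℝ × ℝ :=
  (0, -(b * v.1 + 2 * v.2), v.1)

theorem stmt4 (a b β γ w₁ w₂ : ℝ)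
    (hpre : LN b (w₁, w₂) = (0, -γ, β)) :
    (-2 * b * β ^ 3 + (4 * a - b ^ 2 + 2) * β ^ 2 * γ + γ ^ 3 = 0) ↔
      (a * b * w₁ ^ 3 + (b ^ 2 + 2 * a + 1) * w₁ ^ 2 * w₂ +
        3 * b * w₁ * w₂ ^ 2 + 2 * w₂ ^ 3 = 0) := by
  simp only [LN, Prod.mk.injEq] at hpre
  obtain ⟨-, h1, h2⟩ := hpre
  have hγ : γ = b * w₁ + 2 * w₂ := by linarith
  subst hγ h2
  constructor <;> intro h <;> nlinarith [h]
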